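/- Let n, q be coprime with 0 < q < n and n = bq + r with 0 < r < q. The length sequences S_j = (L((j − kr) mod q))_{k=0}^{q−1} for shifts j = 0, 1, …, q−1 are exactly the q cyclic rotations of S_0; moreover S_{j+1} differs from S_j by a single transposition of two adjacent entries (a b and a b+1 swap places, cyclically). -/
import Mathlib

section aux

variable (q b r : ℕ)

private lemma val_cast_eq_self {q : ℕ} [NeZero q] (a : ZMod q) :
    ((a.val : ℕ) : ZMod q) = a := (ZMod.natCast_val a).trans (ZMod.cast_id _ _)

private lemma L_cast_eval {q b r : ℕ} [NeZero q] (L : ZMod q → ℕ)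
    (hL : ∀ a : ZMod q, L a = if a.val < r then b + 1 else b)
    (m : ℕ) (hm : m < q) : L ((m : ℕ) : ZMod q) = if m < r then b + 1 else b := by
  rw [hL, ZMod.val_cast_of_lt hm]

private lemma L_add_one {q b r : ℕ} [NeZero q] (hq1 : 1 < q) (hr0 : 0 < r) (hr : r < q)
    (L : ZMod q → ℕ)
    (hL : ∀ a : ZMod q, L a = if a.val < r then b + 1 else b)
    (a : ZMod q) (h1 : a ≠ ((r - 1 : ℕ) : ZMod q)) (h2 : a ≠ ((q - 1 : ℕ) : ZMod q)) :
    L (a + 1) = L a := by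
  have hv : a.val < q := ZMod.val_lt a
  have hv1 : a.val ≠ r - 1 := by
    intro h; exact h1 (by rw [← val_cast_eq_self a, h])
  have hv2 : a.val ≠ q - 1 := by
    intro h; exact h2 (by rw [← val_cast_eq_self a, h])
  have hlt : a.val + 1 < q := by omega
  have hval : (a + 1).val = a.val + 1 := by
    have : a + 1 = ((a.val + 1 : ℕ) : ZMod q) := by
      push_cast [val_cast_eq_self a]; ring
    rw [this, ZMod.val_cast_of_lt hlt]
  rw [hL, hL, hval]
  have : (a.val + 1 < r) ↔ (a.val < r) := by omega
  simp [this]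

end aux

/-- the shifted length sequences S_j(k) = L(j − k·r) are each a
cyclic rotation of S_0, and consecutive ones differ by a single transposition
of two cyclically adjacent entries (of distinct values b and b+1). -/
theorem stmt17 (n q b r : ℕ) (hq : 0 < q) (hqn : q < n)
    (hcop : Nat.Coprime n q) (hn : n = b * q + r) (hr0 : 0 < r) (hr : r < q)
    (L : ZMod q → ℕ) (hL : ∀ a : ZMod q, L a = if a.val < r then b + 1 else b)
    (S : ℕ → ℕ → ℕ)
    (hS : ∀ j k, S j k = L ((j : ZMod q) - ((k * r : ℕ) : ZMod q))) :
    (∀ j, ∃ p, ∀ k, S j k = S 0 (k + p)) ∧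
    (∀ j, ∃ t < q, S (j + 1) t = S j ((t + 1) % q) ∧
        S (j + 1) ((t + 1) % q) = S j t ∧
        S j t ≠ S j ((t + 1) % q) ∧
        ∀ k < q, k ≠ t → k ≠ (t + 1) % q → S (j + 1) k = S j k) := by
  haveI : NeZero q := ⟨hq.ne'⟩
  have hq1 : 1 < q := by omega
  have hrq : Nat.Coprime r q := by
    rw [hn] at hcop; simpa [Nat.Coprime, Nat.add_comm] using hcop
  have hu : IsUnit ((r : ℕ) : ZMod q) := (ZMod.isUnit_iff_coprime r q).mpr hrq
  set u : (ZMod q)ˣ := hu.unit with hu_def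
  have huval : (u : ZMod q) = (r : ℕ) := hu.unit_spec
  have hinv : ((u⁻¹ : (ZMod q)ˣ) : ZMod q) * (r : ℕ) = 1 := by
    rw [← huval]; exact u.inv_mul
  -- a handy cancellation lemma
  have hcancel : ∀ x y : ZMod q, x * (r : ℕ) = y * (r : ℕ) → x = y := by
    intro x y h
    have := congrArg (· * ((u⁻¹ : (ZMod q)ˣ) : ZMod q)) h
    simpa [mul_assoc, mul_comm ((r : ℕ) : ZMod q), hinv] using this
  constructor
  · -- rotation part
    intro j
    refine ⟨((-(j : ZMod q)) * ((u⁻¹ : (ZMod q)ˣ) : ZMod q)).val, fun k => ?_⟩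
    rw [hS, hS]
    congr 1
    push_cast [val_cast_eq_self]
    have hp : (-(j : ZMod q)) * ((u⁻¹ : (ZMod q)ˣ) : ZMod q) * (r : ZMod q) = -(j : ZMod q) := by
      have : ((r : ℕ) : ZMod q) = (r : ZMod q) := by push_cast; rfl
      rw [mul_assoc, ← this]
      rw [mul_comm ((u⁻¹ : (ZMod q)ˣ) : ZMod q) _] at hinv ⊢
      rw [hinv, mul_one]
    rw [add_mul, hp]; ring
  · -- transposition part
    intro j
    set c : ZMod q := ((j : ZMod q) - ((r - 1 : ℕ) : ZMod q)) * ((u⁻¹ : (ZMod q)ˣ) : ZMod q)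
      with hc_def
    refine ⟨c.val, ZMod.val_lt c, ?_⟩
    set t := c.val with ht_def
    have ht : ((t : ℕ) : ZMod q) * ((r : ℕ) : ZMod q) = (j : ZMod q) - ((r - 1 : ℕ) : ZMod q) := by
      rw [ht_def, val_cast_eq_self, hc_def, mul_assoc, hinv, mul_one]
    -- basic cast facts
    have hr1q : r - 1 < q := by omega
    have hcast_r1 : ((r - 1 : ℕ) : ZMod q) + 1 = ((r : ℕ) : ZMod q) := by
      have : ((r - 1 : ℕ) : ZMod q) + ((1 : ℕ) : ZMod q) = (((r - 1) + 1 : ℕ) : ZMod q) := by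
        push_cast; ring
      rw [show ((r - 1) + 1 : ℕ) = r by omega] at this
      simpa using this
    have hcast_q1 : ((q - 1 : ℕ) : ZMod q) = -1 := by
      have : ((q - 1 : ℕ) : ZMod q) + 1 = ((q : ℕ) : ZMod q) := by
        have : ((q - 1 : ℕ) : ZMod q) + ((1 : ℕ) : ZMod q) = (((q - 1) + 1 : ℕ) : ZMod q) := by
          push_cast; ring
        rw [show ((q - 1) + 1 : ℕ) = q by omega] at this
        simpa using this
      rw [ZMod.natCast_self] at this
      linear_combination this
    have htp1 : (((t + 1) % q : ℕ) : ZMod q) = ((t : ℕ) : ZMod q) + 1 := by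
      rw [ZMod.natCast_mod]; push_cast; ring
    -- value of S j t
    have hSjt : S j t = b + 1 := by
      rw [hS]
      have : (j : ZMod q) - ((t * r : ℕ) : ZMod q) = ((r - 1 : ℕ) : ZMod q) := by
        push_cast; push_cast at ht; linear_combination -ht
      rw [this, L_cast_eval L hL _ hr1q, if_pos (by omega)]
    -- value of S j (t+1)
    have hSjt1 : S j ((t + 1) % q) = b := by
      rw [hS]
      have : (j : ZMod q) - ((((t + 1) % q) * r : ℕ) : ZMod q) = ((q - 1 : ℕ) : ZMod q) := by
        push_cast [ZMod.natCast_mod]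
        push_cast at ht
        rw [hcast_q1]
        have hr1 : ((r - 1 : ℕ) : ZMod q) = (r : ZMod q) - 1 := by
          linear_combination hcast_r1
        push_cast at hr1
        linear_combination -ht + hr1
      rw [this, L_cast_eval L hL _ (by omega), if_neg (by omega)]
    -- value of S (j+1) t
    have hSj1t : S (j + 1) t = b := by
      rw [hS]
      have : ((j + 1 : ℕ) : ZMod q) - ((t * r : ℕ) : ZMod q) = ((r : ℕ) : ZMod q) := by
        push_cast
        push_cast at ht
        have hr1 : ((r - 1 : ℕ) : ZMod q) = (r : ZMod q) - 1 := by
          linear_combination hcast_r1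
        push_cast at hr1
        linear_combination -ht + hr1
      rw [this, L_cast_eval L hL _ hr, if_neg (by omega)]
    -- value of S (j+1) (t+1)
    have hSj1t1 : S (j + 1) ((t + 1) % q) = b + 1 := by
      rw [hS]
      have : ((j + 1 : ℕ) : ZMod q) - ((((t + 1) % q) * r : ℕ) : ZMod q) = ((0 : ℕ) : ZMod q) := by
        push_cast [ZMod.natCast_mod]
        push_cast at ht
        have hr1 : ((r - 1 : ℕ) : ZMod q) = (r : ZMod q) - 1 := by
          linear_combination hcast_r1
        push_cast at hr1
        linear_combination -ht + hr1
      rw [this, L_cast_eval L hL _ hq, if_pos hr0]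
    refine ⟨by rw [hSj1t, hSjt1], by rw [hSj1t1, hSjt], by omega, ?_⟩
    -- generic positions
    intro k hk hk1 hk2
    rw [hS, hS]
    have hkr : ((k * r : ℕ) : ZMod q) = ((k : ℕ) : ZMod q) * ((r : ℕ) : ZMod q) := by push_cast; ring
    set a : ZMod q := (j : ZMod q) - ((k * r : ℕ) : ZMod q) with ha_def
    have hstep : ((j + 1 : ℕ) : ZMod q) - ((k * r : ℕ) : ZMod q) = a + 1 := by
      rw [ha_def]; push_cast; ring
    rw [hstep]
    refine L_add_one hq1 hr0 hr L hL a ?_ ?_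
    · -- a ≠ r-1 : else k = t
      intro hEq
      apply hk1
      have : ((k : ℕ) : ZMod q) * ((r : ℕ) : ZMod q) = ((t : ℕ) : ZMod q) * ((r : ℕ) : ZMod q) := by
        rw [ht]
        rw [ha_def, hkr] at hEq
        linear_combination -hEq
      have hkt : ((k : ℕ) : ZMod q) = ((t : ℕ) : ZMod q) := hcancel _ _ this
      have := congrArg ZMod.val hkt
      rwa [ZMod.val_cast_of_lt hk, ZMod.val_cast_of_lt (ZMod.val_lt c)] at this
    · -- a ≠ q-1 : else k = (t+1) % q
      intro hEq
      apply hk2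
      have : ((k : ℕ) : ZMod q) * ((r : ℕ) : ZMod q)
          = (((t + 1) % q : ℕ) : ZMod q) * ((r : ℕ) : ZMod q) := by
        rw [htp1, add_mul, one_mul, ht]
        rw [ha_def, hkr] at hEq
        have hr1 : ((r - 1 : ℕ) : ZMod q) = ((r : ℕ) : ZMod q) - 1 := by
          linear_combination hcast_r1
        rw [hcast_q1] at hEq
        linear_combination -hEq + hr1
      have hkt : ((k : ℕ) : ZMod q) = (((t + 1) % q : ℕ) : ZMod q) := hcancel _ _ this
      have := congrArg ZMod.val hkt
      rwa [ZMod.val_cast_of_lt hk, ZMod.val_cast_of_lt (Nat.mod_lt _ hq)] at this
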